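/- arXiv:2402.10103 — 2 statements merged into one kernel-verified Lean document; each statement's English description precedes it below -/
import Mathlib

section
/- In a strong distributive lattice S of group semirings G_α (α ∈ D), for all α, β ∈ D with β ≤ α, the connecting homomorphism φ_{α,β} : G_α → G_β is a group isomorphism and ψ_{β,α} = (φ_{α,β})^{-1}; that is, ψ_{β,α}(φ_{α,β}(x)) = x for all x ∈ G_α and φ_{α,β}(ψ_{β,α}(y)) = y for all y ∈ G_β. -/
variable {D : Type*} [DistribLattice D] {G : D → Type*} [∀ α : D, Group (G α)]

/-- Multiplication on the disjoint union `S = Σ α, G α`: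
`(α, x) · (β, y) = (αβ, φ_{α,αβ}(x) · φ_{β,αβ}(y))`. -/
def sdlMul (φ : ∀ α β : D, β ≤ α → (G α →* G β)) (s t : Σ α : D, G α) :
    Σ α : D, G α :=
  ⟨s.1 ⊓ t.1,
    φ s.1 (s.1 ⊓ t.1) inf_le_left s.2 * φ t.1 (s.1 ⊓ t.1) inf_le_right t.2⟩

/-- Addition on the disjoint union `S = Σ α, G α`:
`(α, x) + (β, y) = (α + β, ψ_{α,α+β}(x))` (each `G α` carries the left-zero
addition, so `ψ_{α,α+β}(x) + ψ_{β,α+β}(y) = ψ_{α,α+β}(x)`). -/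
def sdlAdd (ψ : ∀ β α : D, β ≤ α → (G β →* G α)) (s t : Σ α : D, G α) :
    Σ α : D, G α :=
  ⟨s.1 ⊔ t.1, ψ s.1 (s.1 ⊔ t.1) le_sup_left s.2⟩

/-- In a strong distributive lattice `S` of group semirings
`G α` (`α ∈ D`), for `β ≤ α` the connecting homomorphism
`φ_{α,β} : G α → G β` is a group isomorphism and `ψ_{β,α} = (φ_{α,β})⁻¹`:
`ψ_{β,α}(φ_{α,β}(x)) = x` for all `x ∈ G α` and `φ_{α,β}(ψ_{β,α}(y)) = y`
for all `y ∈ G β`. -/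
theorem sdl_phi_isomorphism
    (φ : ∀ α β : D, β ≤ α → (G α →* G β))
    (ψ : ∀ β α : D, β ≤ α → (G β →* G α))
    (hφ_id : ∀ (α : D) (x : G α), φ α α le_rfl x = x)
    (hψ_id : ∀ (α : D) (x : G α), ψ α α le_rfl x = x)
    (hφ_trans : ∀ {α β γ : D} (h1 : γ ≤ β) (h2 : β ≤ α) (x : G α),
      φ β γ h1 (φ α β h2 x) = φ α γ (h1.trans h2) x)
    (hψ_trans : ∀ {α β γ : D} (h1 : γ ≤ β) (h2 : β ≤ α) (x : G γ),
      ψ β α h2 (ψ γ β h1 x) = ψ γ α (h1.trans h2) x)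
    (hcompat : ∀ {α β δ : D} (h : α ⊔ β ≤ δ) (x : G α),
      ψ (α ⊓ β) β inf_le_right (φ α (α ⊓ β) inf_le_left x)
        = φ δ β (le_sup_right.trans h) (ψ α δ (le_sup_left.trans h) x))
    (hldistrib : ∀ s t u : Σ α : D, G α,
      sdlMul φ s (sdlAdd ψ t u) = sdlAdd ψ (sdlMul φ s t) (sdlMul φ s u))
    (hrdistrib : ∀ s t u : Σ α : D, G α,
      sdlMul φ (sdlAdd ψ s t) u = sdlAdd ψ (sdlMul φ s u) (sdlMul φ t u))
    {α β : D} (h : β ≤ α) :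
    Function.Bijective (φ α β h) ∧
    (∀ x : G α, ψ β α h (φ α β h x) = x) ∧
    (∀ y : G β, φ α β h (ψ β α h y) = y) := by
  have hφ_heq : ∀ {a b b' : D} (_ : b = b') (p : b ≤ a) (p' : b' ≤ a) (x : G a),
      HEq (φ a b p x) (φ a b' p' x) := by
    intro a b b' e p p' x; subst e; rfl
  have hψ_heq : ∀ {a a' b b' : D} (_ : a = a') (_ : b = b') (p : b ≤ a) (p' : b' ≤ a')
      (x : G b) (x' : G b'), HEq x x' → HEq (ψ b a p x) (ψ b' a' p' x') := by
    intro a a' b b' ea eb p p' x x' hx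
    subst ea; subst eb; rw [eq_of_heq hx]
  have key2 : ∀ y : G β, φ α β h (ψ β α h y) = y := by
    intro y
    have hc := hcompat (α := β) (β := β) (δ := α) (by simpa using h) y
    have l1 : HEq ((φ β (β ⊓ β) inf_le_left) y) y := by
      refine HEq.trans (hφ_heq (inf_idem _) _ le_rfl y) ?_
      rw [hφ_id]
    have l2 : HEq ((ψ (β ⊓ β) β inf_le_right) ((φ β (β ⊓ β) inf_le_left) y)) y := by
      refine HEq.trans (hψ_heq rfl (inf_idem _) _ le_rfl _ y l1) ?_
      rw [hψ_id]
    have := (eq_of_heq l2).symm.trans hc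
    exact this.symm
  have key1 : ∀ x : G α, ψ β α h (φ α β h x) = x := by
    intro x
    have H := hrdistrib ⟨β, 1⟩ ⟨α, x⟩ ⟨α, x⟩
    simp only [sdlMul, sdlAdd, map_one, one_mul] at H
    obtain ⟨hfst, hsnd⟩ := Sigma.mk.inj_iff.mp H
    have e0 : φ (β ⊔ α) ((β ⊔ α) ⊓ α) inf_le_left 1 * φ α ((β ⊔ α) ⊓ α) inf_le_right x
        = φ α ((β ⊔ α) ⊓ α) inf_le_right x := by rw [map_one, one_mul]
    replace hsnd := (heq_of_eq e0).symm.trans hsnd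
    have e1 : β ⊔ α = α := sup_eq_right.mpr h
    have e2 : β ⊓ α = β := inf_eq_left.mpr h
    have eg : (β ⊔ α) ⊓ α = α := by rw [e1, inf_idem]
    have eg' : (β ⊓ α) ⊔ (α ⊓ α) = α := by rw [e2, inf_idem, e1]
    have hL : HEq (φ α ((β ⊔ α) ⊓ α) inf_le_right x) x := by
      refine HEq.trans (hφ_heq eg _ le_rfl x) ?_
      rw [hφ_id]
    have hR : HEq (ψ (β ⊓ α) ((β ⊓ α) ⊔ α ⊓ α) le_sup_left ((φ α (β ⊓ α) inf_le_right) x))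
        (ψ β α h (φ α β h x)) :=
      hψ_heq eg' e2 _ h _ _ (hφ_heq e2 _ h x)
    exact (eq_of_heq ((hL.symm.trans hsnd).trans hR)).symm
  refine ⟨⟨fun a b hab => ?_, fun y => ⟨ψ β α h y, key2 y⟩⟩, key1, key2⟩
  have := congrArg (ψ β α h) hab
  rwa [key1, key1] at this
end

section
/- In a strong distributive lattice S of group semirings G_α (α ∈ D), all the component groups are mutually isomorphic: for every α, β ∈ D there exists a group isomorphism G_α ≅ G_β. -/
variable {D : Type*} [DistribLattice D] {G : D → Type*} [∀ α : D, Group (G α)]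

/-- Auxiliary: extract an equality of second components (transported along
index equalities) from an equality of sigma pairs. -/
lemma sdl_sigma_snd_cast {ι : Type*} {F : ι → Type*} {a b c : ι} (e₁ : a = c) (e₂ : b = c)
    {x : F a} {y : F b} (h : (⟨a, x⟩ : Σ i, F i) = ⟨b, y⟩) :
    cast (congrArg F e₁) x = cast (congrArg F e₂) y := by
  subst e₁; subst e₂
  simpa using h

/-- In a strong distributive lattice `S` of group semirings
`G α` (`α ∈ D`), all the component groups are mutually isomorphic: for every
`α, β ∈ D` there is a group isomorphism `G α ≃* G β`. -/
theorem sdl_components_isomorphic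
    (φ : ∀ α β : D, β ≤ α → (G α →* G β))
    (ψ : ∀ β α : D, β ≤ α → (G β →* G α))
    (hφ_id : ∀ (α : D) (x : G α), φ α α le_rfl x = x)
    (hψ_id : ∀ (α : D) (x : G α), ψ α α le_rfl x = x)
    (hφ_trans : ∀ {α β γ : D} (h1 : γ ≤ β) (h2 : β ≤ α) (x : G α),
      φ β γ h1 (φ α β h2 x) = φ α γ (h1.trans h2) x)
    (hψ_trans : ∀ {α β γ : D} (h1 : γ ≤ β) (h2 : β ≤ α) (x : G γ),
      ψ β α h2 (ψ γ β h1 x) = ψ γ α (h1.trans h2) x)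
    (hcompat : ∀ {α β δ : D} (h : α ⊔ β ≤ δ) (x : G α),
      ψ (α ⊓ β) β inf_le_right (φ α (α ⊓ β) inf_le_left x)
        = φ δ β (le_sup_right.trans h) (ψ α δ (le_sup_left.trans h) x))
    (hldistrib : ∀ s t u : Σ α : D, G α,
      sdlMul φ s (sdlAdd ψ t u) = sdlAdd ψ (sdlMul φ s t) (sdlMul φ s u))
    (hrdistrib : ∀ s t u : Σ α : D, G α,
      sdlMul φ (sdlAdd ψ s t) u = sdlAdd ψ (sdlMul φ s u) (sdlMul φ t u))
    (α β : D) :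
    Nonempty (G α ≃* G β) := by
  -- ψ after φ along *equal* indices is the identity.
  have aux1 : ∀ {a b : D} (e : a = b) (h1 : a ≤ b) (h2 : a ≤ b) (x : G b),
      ψ a b h1 (φ b a h2 x) = x := by
    intro a b e h1 h2 x
    subst e
    exact (congrArg (ψ a a h1) (hφ_id a x)).trans (hψ_id a x)
  -- From `hcompat`: for γ ≤ δ, `φ_{δ,γ} ∘ ψ_{γ,δ} = id`.
  have lem1 : ∀ {γ δ : D} (h : γ ≤ δ) (x : G γ), φ δ γ h (ψ γ δ h x) = x := by
    intro γ δ h x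
    have hs : γ ⊔ γ ≤ δ := by simpa using h
    have H := (hcompat (α := γ) (β := γ) (δ := δ) hs x).symm
    calc φ δ γ h (ψ γ δ h x)
        = φ δ γ (le_sup_right.trans hs) (ψ γ δ (le_sup_left.trans hs) x) := rfl
      _ = ψ (γ ⊓ γ) γ inf_le_right (φ γ (γ ⊓ γ) inf_le_left x) := H
      _ = x := aux1 (inf_idem γ) _ _ x
  -- Casting lemmas along an index equality.
  have castφ : ∀ {δ i : D} (e : i = δ) (h : i ≤ δ) (x : G δ),
      cast (congrArg G e) (φ δ i h x) = x := by
    intro δ i e h x; subst e; exact hφ_id _ x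
  have castψ : ∀ {δ i γ : D} (e : i = δ) (h : γ ≤ i) (h' : γ ≤ δ) (y : G γ),
      cast (congrArg G e) (ψ γ i h y) = ψ γ δ h' y := by
    intro δ i γ e h h' y; subst e; rfl
  -- From left distributivity: `ψ_{α⊓β,α} ∘ φ_{α,α⊓β} = id`.
  have lem2 : ∀ (a b : D) (x : G a),
      ψ (a ⊓ b) a inf_le_left (φ a (a ⊓ b) inf_le_left x) = x := by
    intro a b x
    have H := hldistrib ⟨a, x⟩ ⟨b, 1⟩ ⟨a, 1⟩
    simp only [sdlMul, sdlAdd, map_one, mul_one] at H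
    have e₁ : a ⊓ (b ⊔ a) = a := inf_eq_left.mpr le_sup_right
    have e₂ : a ⊓ b ⊔ a ⊓ a = a := by simp
    have H2 := sdl_sigma_snd_cast e₁ e₂ H
    erw [map_one (φ (b ⊔ a) (a ⊓ (b ⊔ a)) _), mul_one] at H2
    erw [castφ e₁, castψ e₂ _ inf_le_left] at H2
    exact H2.symm
  -- Hence for any γ ≤ δ, `ψ_{γ,δ} ∘ φ_{δ,γ} = id` (transport `lem2`).
  have lem2' : ∀ {γ δ : D} (h : γ ≤ δ) (x : G δ), ψ γ δ h (φ δ γ h x) = x := by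
    intro γ δ h x
    have e : δ ⊓ γ = γ := inf_eq_right.mpr h
    have transport : ∀ {a b : D} (e' : a = b) (ha : a ≤ δ) (hb : b ≤ δ),
        ψ a δ ha (φ δ a ha x) = ψ b δ hb (φ δ b hb x) := by
      intro a b e' ha hb; subst e'; rfl
    exact (transport e.symm h inf_le_left).trans (lem2 δ γ x)
  -- Build the isomorphism `G δ ≃* G γ` for `γ ≤ δ`.
  have iso : ∀ {γ δ : D} (h : γ ≤ δ), G δ ≃* G γ := by
    intro γ δ h
    exact { toFun := φ δ γ h
            invFun := ψ γ δ h
            left_inv := lem2' h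
            right_inv := lem1 h
            map_mul' := map_mul (φ δ γ h) }
  exact ⟨(iso (inf_le_left : α ⊓ β ≤ α)).trans (iso (inf_le_right : α ⊓ β ≤ β)).symm⟩
end
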